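/- If a tree T and a connected unicyclic graph G, both on n vertices, have at least ⌊n/2⌋ + 2 common cards, then G has at least n/4 − 1 vertices of degree 1. -/

import Mathlib

open SimpleGraph

/-- The vertex-deleted subgraph `G - v`: the induced subgraph on the remaining vertices. -/
def deleteVert {V : Type*} (G : SimpleGraph V) (v : V) : SimpleGraph {w : V // w ≠ v} :=
  G.induce {w : V | w ≠ v}

/-- `G` contains a cycle. -/
def HasCycleG {V : Type*} (G : SimpleGraph V) : Prop :=
  ∃ (u : V) (c : G.Walk u u), c.IsCycle

/-- `G` contains at least two distinct cycles (distinct as subgraphs,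
i.e. with different edge sets). -/
def TwoCycles {V : Type*} (G : SimpleGraph V) : Prop :=
  ∃ (u v : V) (c : G.Walk u u) (c' : G.Walk v v),
    c.IsCycle ∧ c'.IsCycle ∧ ¬ (∀ e, e ∈ c.edges ↔ e ∈ c'.edges)

/-- `G` contains exactly one cycle: it has a cycle, and any two cycles are equal
as subgraphs (have the same edge set). -/
def Unicyclic {V : Type*} (G : SimpleGraph V) : Prop :=
  HasCycleG G ∧ ∀ (u v : V) (c : G.Walk u u) (c' : G.Walk v v),
    c.IsCycle → c'.IsCycle → ∀ e, e ∈ c.edges ↔ e ∈ c'.edges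

/-- `F` and `G` have at least `k` common cards, i.e. the multiset intersection of their
decks has size at least `k`: there are `k` distinct vertices of `F` and `k` distinct
vertices of `G` whose corresponding vertex-deleted subgraphs are pairwise isomorphic. -/
def CommonCards {V W : Type*} (F : SimpleGraph V) (G : SimpleGraph W) (k : ℕ) : Prop :=
  ∃ (f : Fin k ↪ V) (g : Fin k ↪ W),
    ∀ i, Nonempty (deleteVert F (f i) ≃g deleteVert G (g i))


section Aux

instance {V : Type*} (G : SimpleGraph V) [DecidableRel G.Adj] (v : V) :
    DecidableRel (deleteVert G v).Adj := fun a b =>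
  inferInstanceAs (Decidable (G.Adj a.val b.val))

lemma deleteVert_adj {V : Type*} {G : SimpleGraph V} {v : V} {a b : {w : V // w ≠ v}} :
    (deleteVert G v).Adj a b ↔ G.Adj a.val b.val := by
  simp [deleteVert]

open Finset in
lemma deleteVert_card_edgeFinset {V : Type*} [Fintype V] [DecidableEq V]
    (G : SimpleGraph V) [DecidableRel G.Adj] (v : V) :
    #(deleteVert G v).edgeFinset + G.degree v = #G.edgeFinset := by
  classical
  have hinj : Function.Injective (Sym2.map (Subtype.val : {w : V // w ≠ v} → V)) :=
    Sym2.map.injective Subtype.val_injective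
  have hbij : #(deleteVert G v).edgeFinset
      = #(G.edgeFinset.filter (fun e => v ∉ e)) := by
    apply Finset.card_bij (fun e _ => Sym2.map Subtype.val e)
    · intro e he
      simp only [mem_edgeFinset] at he
      induction e with
      | _ a b =>
        simp only [mem_edgeSet] at he
        have hadj : G.Adj a.val b.val := he
        simp only [Sym2.map_pair_eq, mem_filter, mem_edgeFinset, mem_edgeSet, Sym2.mem_iff]
        exact ⟨hadj, by push_neg; exact ⟨fun h => (a.2 h.symm).elim, fun h => (b.2 h.symm).elim⟩⟩
    · intro e₁ h₁ e₂ h₂ h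
      exact hinj h
    · intro e he
      simp only [mem_filter, mem_edgeFinset, mem_edgeSet] at he
      induction e with
      | _ a b =>
        obtain ⟨hadj, hv⟩ := he
        simp only [Sym2.mem_iff] at hv
        push_neg at hv
        refine ⟨s(⟨a, fun h => hv.1 h.symm⟩, ⟨b, fun h => hv.2 h.symm⟩), ?_, rfl⟩
        exact mem_edgeFinset.2 hadj
  rw [hbij]
  have hsplit := Finset.card_filter_add_card_filter_not
    (s := G.edgeFinset) (p := fun e => v ∉ e)
  have : G.edgeFinset.filter (fun e => ¬ v ∉ e) = G.incidenceFinset v := by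
    ext e
    simp only [mem_filter, mem_edgeFinset, not_not, mem_incidenceFinset,
      SimpleGraph.incidenceSet, Set.mem_toFinset, Set.mem_setOf_eq, mem_edgeSet]
  rw [this, card_incidenceFinset_eq_degree] at hsplit
  omega

open Finset in
lemma deleteVert_degree {V : Type*} [Fintype V] [DecidableEq V]
    (G : SimpleGraph V) [DecidableRel G.Adj] (v : V) (u : {w : V // w ≠ v}) :
    (deleteVert G v).degree u + (if G.Adj u.val v then 1 else 0) = G.degree u.val := by
  classical
  have hcard : (deleteVert G v).degree u = #((G.neighborFinset u.val).erase v) := by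
    rw [← card_neighborFinset_eq_degree]
    apply Finset.card_bij (fun x _ => x.val)
    · intro x hx
      simp only [mem_neighborFinset, deleteVert_adj] at hx
      simp [Finset.mem_erase, x.2, mem_neighborFinset, hx]
    · intro x _ y _ h; exact Subtype.val_injective h
    · intro y hy
      simp only [Finset.mem_erase, mem_neighborFinset] at hy
      exact ⟨⟨y, hy.1⟩, by simp [mem_neighborFinset, deleteVert_adj, hy.2], rfl⟩
  rw [hcard]
  by_cases hadj : G.Adj u.val v
  · have hv : v ∈ G.neighborFinset u.val := by simpa [mem_neighborFinset] using hadj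
    rw [Finset.card_erase_of_mem hv, if_pos hadj, ← card_neighborFinset_eq_degree]
    have : 1 ≤ #(G.neighborFinset u.val) := Finset.card_pos.mpr ⟨v, hv⟩
    omega
  · have hv : v ∉ G.neighborFinset u.val := by simpa [mem_neighborFinset] using hadj
    rw [Finset.erase_eq_of_notMem hv, if_neg hadj, card_neighborFinset_eq_degree,
      Nat.add_zero]

lemma connected_one_le_degree {V : Type*} [Fintype V]
    (G : SimpleGraph V) [DecidableRel G.Adj] (hc : G.Connected)
    (h2 : 2 ≤ Fintype.card V) (v : V) : 1 ≤ G.degree v := by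
  obtain ⟨w, hw⟩ := Fintype.exists_ne_of_one_lt_card (by omega) v
  obtain ⟨p⟩ := hc v w
  cases p with
  | nil => exact absurd rfl hw.symm
  | cons h q =>
    have : 0 < G.degree v := G.degree_pos_iff_exists_adj v |>.mpr ⟨_, h⟩
    omega

lemma iso_degree {α β : Type*} {A : SimpleGraph α} {B : SimpleGraph β}
    [Fintype α] [Fintype β] [DecidableRel A.Adj] [DecidableRel B.Adj]
    (φ : A ≃g B) (a : α) : A.degree a = B.degree (φ a) := by
  rw [← card_neighborSet_eq_degree, ← card_neighborSet_eq_degree]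
  exact Fintype.card_congr (φ.mapNeighborSet a)

open Finset in
lemma iso_leaf_card {α β : Type*} {A : SimpleGraph α} {B : SimpleGraph β}
    [Fintype α] [Fintype β] [DecidableRel A.Adj] [DecidableRel B.Adj]
    (φ : A ≃g B) :
    #(univ.filter fun a => A.degree a = 1) = #(univ.filter fun b => B.degree b = 1) := by
  apply Finset.card_bij (fun a _ => φ a)
  · intro a ha
    simp only [mem_filter, mem_univ, true_and] at ha ⊢
    rw [← iso_degree φ a]; exact ha
  · intro a _ b _ h; exact φ.toEquiv.injective h
  · intro b hb
    simp only [mem_filter, mem_univ, true_and] at hb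
    refine ⟨φ.symm b, ?_, by simp⟩
    simp only [mem_filter, mem_univ, true_and, iso_degree φ (φ.symm b)]
    rw [RelIso.apply_symm_apply]; exact hb

open Finset in
lemma leaf_card_deleteVert_le {V : Type*} [Fintype V] [DecidableEq V]
    (G : SimpleGraph V) [DecidableRel G.Adj] (w : V) (hw : G.degree w = 2) :
    #(univ.filter fun u : {x : V // x ≠ w} => (deleteVert G w).degree u = 1)
      ≤ #(univ.filter fun x : V => G.degree x = 1) + 2 := by
  have hsub : #(univ.filter fun u : {x : V // x ≠ w} => (deleteVert G w).degree u = 1)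
      ≤ #((univ.filter fun x : V => G.degree x = 1) ∪ G.neighborFinset w) := by
    apply Finset.card_le_card_of_injOn (fun u => u.val)
    · intro u hu
      simp only [Finset.mem_coe, mem_filter, mem_univ, true_and] at hu
      have hd := deleteVert_degree G w u
      by_cases hadj : G.Adj u.val w
      · simp [Finset.mem_union, mem_neighborFinset, hadj.symm]
      · rw [if_neg hadj] at hd
        simp only [Finset.mem_coe, Finset.mem_union, mem_filter, mem_univ, true_and]
        left; omega
    · intro a _ b _ h; exact Subtype.val_injective h
  calc _ ≤ _ := hsub
    _ ≤ #(univ.filter fun x : V => G.degree x = 1) + #(G.neighborFinset w) :=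
        Finset.card_union_le _ _
    _ = _ := by rw [card_neighborFinset_eq_degree, hw]

open Finset in
lemma leaf_card_le_deleteVert {V : Type*} [Fintype V] [DecidableEq V]
    (T : SimpleGraph V) [DecidableRel T.Adj] (hc : T.Connected)
    (h3 : 3 ≤ Fintype.card V) (v : V) (hv : T.degree v = 1) :
    #(univ.filter fun x : V => T.degree x = 1)
      ≤ #(univ.filter fun u : {x : V // x ≠ v} => (deleteVert T v).degree u = 1) + 1 := by
  have hno : ∀ u : V, u ≠ v → T.degree u = 1 → ¬ T.Adj u v := by
    intro u hune hu hadj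
    have hnu : T.neighborFinset u = {v} := by
      apply Finset.eq_singleton_iff_unique_mem.mpr
      refine ⟨by simpa [mem_neighborFinset] using hadj, ?_⟩
      intro x hx
      by_contra hne
      have : 2 ≤ #(T.neighborFinset u) :=
        Finset.one_lt_card.mpr ⟨x, hx, v, by simpa [mem_neighborFinset] using hadj, hne⟩
      rw [card_neighborFinset_eq_degree, hu] at this; omega
    have hnv : T.neighborFinset v = {u} := by
      apply Finset.eq_singleton_iff_unique_mem.mpr
      refine ⟨by simpa [mem_neighborFinset] using hadj.symm, ?_⟩
      intro x hx
      by_contra hne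
      have : 2 ≤ #(T.neighborFinset v) :=
        Finset.one_lt_card.mpr ⟨x, hx, u, by simpa [mem_neighborFinset] using hadj.symm, hne⟩
      rw [card_neighborFinset_eq_degree, hv] at this; omega
    have key : ∀ (a b : V) (_ : T.Walk a b), a = u ∨ a = v → b = u ∨ b = v := by
      intro a b p
      induction p with
      | nil => exact id
      | @cons x y z hxy q ih =>
        intro hx
        apply ih
        rcases hx with rfl | rfl
        · have : y ∈ T.neighborFinset x := by simpa [mem_neighborFinset] using hxy
          rw [hnu] at this; right; simpa using this
        · have : y ∈ T.neighborFinset x := by simpa [mem_neighborFinset] using hxy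
          rw [hnv] at this; left; simpa using this
    have hex : ∃ z : V, z ∉ ({u, v} : Finset V) := by
      by_contra hcon
      push_neg at hcon
      have hsub : (univ : Finset V) ⊆ {u, v} := fun z _ => hcon z
      have hle := Finset.card_le_card hsub
      rw [Finset.card_univ] at hle
      have h2 : #({u, v} : Finset V) ≤ 2 :=
        (Finset.card_insert_le _ _).trans (by simp)
      omega
    obtain ⟨z, hz⟩ := hex
    simp only [Finset.mem_insert, Finset.mem_singleton] at hz
    push_neg at hz
    obtain ⟨p⟩ := hc u z
    rcases key u z p (Or.inl rfl) with rfl | rfl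
    · exact hz.1 rfl
    · exact hz.2 rfl
  have h1 : #(univ.filter fun x : V => T.degree x = 1)
      ≤ #((univ.filter fun x : V => T.degree x = 1).erase v) + 1 := by
    have h2 := Finset.pred_card_le_card_erase
      (s := univ.filter fun x : V => T.degree x = 1) (a := v)
    omega
  refine h1.trans (Nat.add_le_add_right ?_ 1)
  apply Finset.card_le_card_of_surjOn (fun u : {x : V // x ≠ v} => u.val)
  intro x hx
  simp only [Finset.coe_erase, Set.mem_diff, Finset.coe_filter, Set.mem_setOf_eq,
    Set.mem_singleton_iff, mem_univ, true_and] at hx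
  obtain ⟨hx1, hxv⟩ := hx
  have hnadj : ¬ T.Adj x v := hno x hxv hx1
  have hd := deleteVert_degree T v (⟨x, hxv⟩ : {x : V // x ≠ v})
  rw [if_neg hnadj] at hd
  refine ⟨⟨x, hxv⟩, ?_, rfl⟩
  simp only [Finset.mem_coe, Finset.mem_filter, Finset.mem_univ, true_and]
  have hd' : (deleteVert T v).degree ⟨x, hxv⟩ + 0 = T.degree x := hd
  omega

open Finset in
lemma unicyclic_card_edgeFinset {W : Type*} [Fintype W] [DecidableEq W]
    (G : SimpleGraph W) [DecidableRel G.Adj] (hGc : G.Connected) (hGu : Unicyclic G) :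
    G.edgeFinset.card = Fintype.card W := by
  classical
  obtain ⟨u, c0, hc0⟩ := hGu.1
  have hne : c0.edges ≠ [] := by
    have h3 := hc0.three_le_length
    intro h
    have := c0.length_edges
    rw [h] at this
    simp at this
    omega
  obtain ⟨e0, he0⟩ := List.exists_mem_of_ne_nil _ hne
  revert he0
  induction e0 using Sym2.ind with
  | _ a b =>
  intro he0
  have hab : G.Adj a b := c0.adj_of_mem_edges he0
  set G' : SimpleGraph W := G \ fromEdgeSet {s(a, b)} with hG'
  have hle : G' ≤ G := sdiff_le
  have hreach : G'.Reachable a b :=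
    (adj_and_reachable_delete_edges_iff_exists_cycle.mpr ⟨u, c0, hc0, he0⟩).2
  have key : ∀ {x y : W}, G.Walk x y → G'.Reachable x y := by
    intro x y p
    induction p with
    | nil => exact Reachable.refl _
    | @cons x' y' z' hadj q ih =>
      refine Reachable.trans ?_ ih
      by_cases he : s(x', y') = s(a, b)
      · rw [Sym2.eq_iff] at he
        rcases he with ⟨rfl, rfl⟩ | ⟨rfl, rfl⟩
        · exact hreach
        · exact hreach.symm
      · refine Adj.reachable ?_
        rw [hG', sdiff_adj, fromEdgeSet_adj]
        exact ⟨hadj, by tauto⟩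
  have hconn' : G'.Connected := by
    rw [connected_iff]
    exact ⟨fun x y => key ((hGc x y).some), hGc.nonempty⟩
  have hacyc : G'.IsAcyclic := by
    intro w p hp
    have hpG : (p.mapLe hle).IsCycle := (Walk.mapLe_isCycle hle).mpr hp
    have hmem : s(a, b) ∈ (p.mapLe hle).edges :=
      (hGu.2 u w c0 (p.mapLe hle) hc0 hpG s(a, b)).mp he0
    have hmem' : s(a, b) ∈ p.edges := by
      rw [Walk.edges_mapLe_eq_edges] at hmem
      exact hmem
    have := p.edges_subset_edgeSet hmem'
    rw [hG'] at this
    simp only [edgeSet_sdiff, edgeSet_fromEdgeSet, Set.mem_diff, Set.mem_diff,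
      Set.mem_singleton_iff, Set.mem_setOf_eq] at this
    simp [hab.ne] at this
  have htree : G'.IsTree := ⟨hconn', hacyc⟩
  have hcard := htree.card_edgeFinset
  have hEq : G'.edgeFinset = G.edgeFinset.erase s(a, b) := by
    ext e
    simp only [mem_edgeFinset, Finset.mem_erase, hG', edgeSet_sdiff, edgeSet_fromEdgeSet,
      Set.mem_diff, Set.mem_singleton_iff, Set.mem_setOf_eq]
    constructor
    · rintro ⟨he, hne⟩
      refine ⟨fun h => hne ⟨h, ?_⟩, he⟩
      rw [h]
      simp [hab.ne]
    · rintro ⟨hne, he⟩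
      exact ⟨he, fun h => hne h.1⟩
  rw [hEq] at hcard
  have hmem : s(a, b) ∈ G.edgeFinset := by simpa [mem_edgeFinset] using hab
  rw [Finset.card_erase_of_mem hmem] at hcard
  have : 1 ≤ #G.edgeFinset := Finset.card_pos.mpr ⟨_, hmem⟩
  omega

end Aux

theorem stmt5 {V W : Type*} [Fintype V] [Fintype W] [DecidableEq W]
    (T : SimpleGraph V) (G : SimpleGraph W) [DecidableRel G.Adj]
    (n : ℕ) (hnV : Fintype.card V = n) (hnW : Fintype.card W = n)
    (hT : T.IsTree) (hGc : G.Connected) (hGu : Unicyclic G)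
    (hcc : CommonCards T G (n / 2 + 2)) :
    (n : ℝ) / 4 - 1 ≤ (Finset.univ.filter (fun w : W => G.degree w = 1)).card := by
  classical
  by_cases hn4 : n ≤ 4
  · have h0 : (0:ℝ) ≤ ((Finset.univ.filter (fun w : W => G.degree w = 1)).card : ℝ) :=
      Nat.cast_nonneg _
    have h1 : (n:ℝ) ≤ 4 := by exact_mod_cast hn4
    linarith
  push_neg at hn4
  haveI : DecidableEq V := Classical.decEq V
  haveI : DecidableRel T.Adj := Classical.decRel _
  obtain ⟨f, g, hfg⟩ := hcc
  have hGE : G.edgeFinset.card = n := by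
    rw [unicyclic_card_edgeFinset G hGc hGu, hnW]
  have hTE : T.edgeFinset.card + 1 = n := by
    rw [hT.card_edgeFinset, hnV]
  have hdeg : ∀ i, G.degree (g i) = T.degree (f i) + 1 := by
    intro i
    have h1 := deleteVert_card_edgeFinset T (f i)
    have h2 := deleteVert_card_edgeFinset G (g i)
    have h3 : (deleteVert T (f i)).edgeFinset.card = (deleteVert G (g i)).edgeFinset.card :=
      (hfg i).some.card_edgeFinset_eq
    omega
  have hdegT : ∀ v, 1 ≤ T.degree v :=
    connected_one_le_degree T hT.isConnected (by omega)
  have hdegG : ∀ w, 1 ≤ G.degree w :=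
    connected_one_le_degree G hGc (by omega)
  set L := (Finset.univ.filter (fun w : W => G.degree w = 1)).card with hLdef
  set B := (Finset.univ.filter (fun w : W => 3 ≤ G.degree w)).card with hBdef
  have hBL : B ≤ L := by
    have hsum := G.sum_degrees_eq_twice_card_edges
    have hpt : ∀ w : W, 2 + (if 3 ≤ G.degree w then 1 else 0)
        ≤ G.degree w + (if G.degree w = 1 then 1 else 0) := by
      intro w
      have := hdegG w
      split_ifs <;> omega
    have hle := Finset.sum_le_sum (fun w (_ : w ∈ Finset.univ) => hpt w)
    rw [Finset.sum_add_distrib, Finset.sum_add_distrib, ← Finset.card_filter,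
      ← Finset.card_filter, Finset.sum_const, smul_eq_mul,
      Finset.card_univ, hnW, hsum, hGE] at hle
    omega
  set I1 := Finset.univ.filter (fun i : Fin (n / 2 + 2) => T.degree (f i) = 1) with hI1def
  set I2 := Finset.univ.filter (fun i : Fin (n / 2 + 2) => ¬ T.degree (f i) = 1) with hI2def
  have hI12 : I1.card + I2.card = n / 2 + 2 := by
    rw [hI1def, hI2def, Finset.card_filter_add_card_filter_not,
      Finset.card_univ, Fintype.card_fin]
  have hI2B : I2.card ≤ B := by
    rw [hBdef]
    apply Finset.card_le_card_of_injOn (fun i => g i)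
    · intro i hi
      simp only [hI2def, Finset.mem_coe, Finset.mem_filter, Finset.mem_univ, true_and] at hi
      simp only [Finset.mem_coe, Finset.mem_filter, Finset.mem_univ, true_and]
      have h1 := hdeg i
      have h2 := hdegT (f i)
      omega
    · intro a _ b _ h
      exact g.injective h
  have hLfT : I1.card ≤ (Finset.univ.filter (fun v : V => T.degree v = 1)).card := by
    apply Finset.card_le_card_of_injOn (fun i => f i)
    · intro i hi
      simp only [hI1def, Finset.mem_coe, Finset.mem_filter, Finset.mem_univ, true_and] at hi
      simp only [Finset.mem_coe, Finset.mem_filter, Finset.mem_univ, true_and]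
      exact hi
    · intro a _ b _ h
      exact f.injective h
  have hfin : n ≤ 4 * L + 4 := by
    by_cases hI1e : I1.card = 0
    · omega
    · obtain ⟨i0, hi0⟩ := Finset.card_pos.mp (by omega : 0 < I1.card)
      simp only [hI1def, Finset.mem_filter, Finset.mem_univ, true_and] at hi0
      have hG2 : G.degree (g i0) = 2 := by
        rw [hdeg i0, hi0]
      have h5 := leaf_card_le_deleteVert T hT.isConnected (by omega) (f i0) hi0
      have hiso := iso_leaf_card (hfg i0).some
      have h4 := leaf_card_deleteVert_le G (g i0) hG2
      rw [hiso] at h5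
      omega
  have hfinR : (n:ℝ) ≤ 4 * (L:ℝ) + 4 := by exact_mod_cast hfin
  linarith
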